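/- Let P be a directed acyclic graph and B = {b_1, …, b_k} ⊆ V(P), k ≥ 5, with the property that for 1 ≤ i < j ≤ k, if b_i and b_j are related by reachability in either direction then j = i+1 or (i,j) = (1,k) (cyclic consecutiveness). Suppose v ∉ B lies on a directed b_i → b_{i+1} path in P, and also lies on a directed x → y path with x, y ∈ B and {x,y} ≠ {b_i, b_{i+1}}. Then (x,y) = (b_i, b_{i-1}) or (x,y) = (b_{i+2}, b_{i+1}) (indices mod k). Moreover, v cannot simultaneously lie on some b_i → b_{i-1} path and some b_{i+2} → b_{i+1} path. -/
import Mathlib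


/-- In a DAG with a cyclically consecutive boundary set `B`
(`k ≥ 5`), if `v ∉ B` lies on a `b i → b (i+1)` path, then any other pair
`x, y ∈ B` with a `b x → v → b y` path and `{x,y} ≠ {i,i+1}` satisfies
`(x,y) = (i, i-1)` or `(x,y) = (i+2, i+1)`; moreover `v` cannot lie both on a
`b i → b (i-1)` path and on a `b (i+2) → b (i+1)` path. -/
theorem stmt5 {V : Type*} (E : V → V → Prop)
    (hacyc : ∀ w, ¬ Relation.TransGen E w w)
    (k : ℕ) (hk : 5 ≤ k)
    (b : ZMod k → V) (hb : Function.Injective b)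
    (hcons : ∀ i j : ZMod k, i ≠ j →
      (Relation.ReflTransGen E (b i) (b j) ∨ Relation.ReflTransGen E (b j) (b i)) →
      j = i + 1 ∨ i = j + 1)
    (v : V) (hv : v ∉ Set.range b) (i : ZMod k)
    (hv1 : Relation.ReflTransGen E (b i) v ∧ Relation.ReflTransGen E v (b (i + 1))) :
    (∀ x y : ZMod k, Relation.ReflTransGen E (b x) v → Relation.ReflTransGen E v (b y) →
      ({x, y} : Set (ZMod k)) ≠ {i, i + 1} →
      ((x = i ∧ y = i - 1) ∨ (x = i + 2 ∧ y = i + 1))) ∧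
    ¬ ((Relation.ReflTransGen E (b i) v ∧ Relation.ReflTransGen E v (b (i - 1))) ∧
       (Relation.ReflTransGen E (b (i + 2)) v ∧ Relation.ReflTransGen E v (b (i + 1)))) := by
  obtain ⟨hiv, hvi1⟩ := hv1
  -- small nonzero constants in ZMod k
  have hnz : ∀ n : ℕ, 0 < n → n < k → ((n : ZMod k) ≠ 0) := by
    intro n h1 h2 h
    rw [ZMod.natCast_eq_zero_iff] at h
    exact absurd (Nat.le_of_dvd h1 h) (by omega)
  have h2 : (2 : ZMod k) ≠ 0 := by
    have := hnz 2 (by omega) (by omega); simpa using this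
  have h3 : (3 : ZMod k) ≠ 0 := by
    have := hnz 3 (by omega) (by omega); simpa using this
  have h4 : (4 : ZMod k) ≠ 0 := by
    have := hnz 4 (by omega) (by omega); simpa using this
  -- no two-way reachability between distinct vertices
  have no2 : ∀ a c : V, a ≠ c → Relation.ReflTransGen E a c →
      Relation.ReflTransGen E c a → False := by
    intro a c hne hac hca
    rcases Relation.reflTransGen_iff_eq_or_transGen.mp hac with h | h
    · exact hne h.symm
    · exact hacyc a (h.trans_left hca)
  have hvne : ∀ j : ZMod k, v ≠ b j := by
    intro j h; exact hv ⟨j, h.symm⟩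
  -- key: b(i+2) cannot reach b(i-1)
  have key : ¬ Relation.ReflTransGen E (b (i + 2)) (b (i - 1)) := by
    intro h
    have hne : i + 2 ≠ i - 1 := by
      intro he
      exact h3 (by linear_combination he)
    rcases hcons _ _ hne (Or.inl h) with he | he
    · exact h4 (by linear_combination -he)
    · exact h2 (by linear_combination he)
  constructor
  · intro x y hxv hvy hne
    -- x ∈ {i, i+2}
    have hx : x = i ∨ x = i + 2 := by
      by_cases hxi1 : x = i + 1
      · subst hxi1
        exact (no2 (b (i + 1)) v (Ne.symm (hvne _)) hxv hvi1).elim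
      · rcases hcons x (i + 1) (by simpa using hxi1) (Or.inl (hxv.trans hvi1)) with he | he
        · exact Or.inl (by linear_combination -he)
        · exact Or.inr (by linear_combination he)
    -- y ∈ {i+1, i-1}
    have hy : y = i + 1 ∨ y = i - 1 := by
      by_cases hyi : y = i
      · exact (no2 v (b y) (hvne y) hvy (hyi ▸ hiv)).elim
      · rcases hcons i y (fun h => hyi h.symm) (Or.inl (hiv.trans hvy)) with he | he
        · exact Or.inl he
        · exact Or.inr (by linear_combination -he)
    rcases hx with rfl | rfl <;> rcases hy with rfl | rfl
    · exact absurd rfl hne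
    · exact Or.inl ⟨rfl, rfl⟩
    · exact Or.inr ⟨rfl, rfl⟩
    · exact absurd (hxv.trans hvy) key
  · rintro ⟨⟨_, hvm⟩, ⟨hp2, _⟩⟩
    exact key (hp2.trans hvm)
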